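/- Suppose f is worst-case monotone and worst-case submodular, f(∅) = 0, and f(φ) = Q for every φ ∈ U, where Q > 0. Let η be a real number with 0 < η ≤ Q such that for every partial realization ψ consistent with some realization in U, f(ψ) > Q − η implies f(ψ) = Q. Let π^g be a worst-case density-greedy policy. Then for every adaptive policy π* that covers Q (i.e., f(ψ(π*,φ)) ≥ Q for every φ ∈ U), c_wc(π^g) ≤ (ln(Q/η) + 1) · c_wc(π*). -/

import Mathlib

namespace WCAS

variable {ι O : Type*}

/-- The domain of a partial realization `ψ : ι → Option O`. -/
def dom (ψ : ι → Option O) : Set ι := {e | ψ e ≠ none}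

/-- A (full) realization `φ` is consistent with a partial realization `ψ`. -/
def consistent (φ : ι → O) (ψ : ι → Option O) : Prop :=
  ∀ e o, ψ e = some o → φ e = o

/-- `ψ` is a subrealization of `ψ'` (written `ψ ⊆ ψ'`). -/
def subreal (ψ ψ' : ι → Option O) : Prop :=
  ∀ e o, ψ e = some o → ψ' e = some o

/-- Extend a partial realization `ψ` by observing state `o` for item `e`. -/
def extendPR [DecidableEq ι] (ψ : ι → Option O) (e : ι) (o : O) : ι → Option O :=
  fun x => if x = e then some o else ψ x

/-- The empty partial realization. -/
def emptyPR : ι → Option O := fun _ => none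

/-- View a full realization as a partial realization with full domain. -/
def toPR (φ : ι → O) : ι → Option O := fun e => some (φ e)

/-- `O(e, ψ)`: the set of possible states of item `e` given observation `ψ`,
with respect to the set `U` of possible realizations. -/
def Ostates (U : Set (ι → O)) (e : ι) (ψ : ι → Option O) : Set O :=
  {o | ∃ φ ∈ U, consistent φ ψ ∧ φ e = o}

/-- The worst-case marginal utility `Δwc(e | ψ)` of item `e` on top of `ψ`. -/
noncomputable def Dwc [DecidableEq ι] (f : (ι → Option O) → ℝ) (U : Set (ι → O))
    (e : ι) (ψ : ι → Option O) : ℝ :=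
  sInf ((fun o => f (extendPR ψ e o) - f ψ) '' Ostates U e ψ)

/-- `f` is worst-case monotone. -/
def WCMonotone [DecidableEq ι] (f : (ι → Option O) → ℝ) (U : Set (ι → O)) : Prop :=
  ∀ ψ : ι → Option O, (∃ φ ∈ U, consistent φ ψ) →
    ∀ e, e ∉ dom ψ → 0 ≤ Dwc f U e ψ

/-- `f` is worst-case submodular. -/
def WCSubmodular [DecidableEq ι] (f : (ι → Option O) → ℝ) (U : Set (ι → O)) : Prop :=
  ∀ ψ ψ' : ι → Option O, subreal ψ ψ' → (∃ φ ∈ U, consistent φ ψ') →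
    ∀ e, e ∉ dom ψ' → Dwc f U e ψ' ≤ Dwc f U e ψ

/-- An adaptive policy maps each observation either to an item outside its
domain or to `none` (stop). -/
def ValidPolicy (π : (ι → Option O) → Option ι) : Prop :=
  ∀ ψ e, π ψ = some e → ψ e = none

/-- One step of executing policy `π` under realization `φ`. -/
def stepPolicy [DecidableEq ι] (π : (ι → Option O) → Option ι) (φ : ι → O)
    (ψ : ι → Option O) : ι → Option O :=
  match π ψ with
  | none => ψ
  | some e => extendPR ψ e (φ e)

/-- Executing policy `π` under realization `φ` for `n` steps, starting from the
empty observation. -/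
def runPolicy [DecidableEq ι] (π : (ι → Option O) → Option ι) (φ : ι → O) :
    ℕ → ι → Option O
  | 0 => emptyPR
  | n + 1 => stepPolicy π φ (runPolicy π φ n)

/-- The final partial realization `ψ(π, φ)` produced by executing `π` under `φ`
(a valid policy over a finite ground set terminates within `card ι` steps). -/
def finalPR [DecidableEq ι] [Fintype ι] (π : (ι → Option O) → Option ι) (φ : ι → O) :
    ι → Option O :=
  runPolicy π φ (Fintype.card ι)

open scoped Classical in
/-- The total cost `c(dom ψ)` of the items in the domain of `ψ`. -/
noncomputable def costPR [Fintype ι] (c : ι → ℝ) (ψ : ι → Option O) : ℝ :=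
  ∑ e : ι, if (ψ e).isSome then c e else 0

/-- The worst-case cost `c_wc(π) = max_{φ ∈ U} c(dom ψ(π, φ))`. -/
noncomputable def cwc [DecidableEq ι] [Fintype ι] (c : ι → ℝ) (U : Set (ι → O))
    (π : (ι → Option O) → Option ι) : ℝ :=
  sSup ((fun φ => costPR c (finalPR π φ)) '' U)

/-- The worst-case utility `f_wc(π) = min_{φ ∈ U} f(ψ(π, φ))`. -/
noncomputable def fwc [DecidableEq ι] [Fintype ι] (f : (ι → Option O) → ℝ)
    (U : Set (ι → O)) (π : (ι → Option O) → Option ι) : ℝ :=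
  sInf ((fun φ => f (finalPR π φ)) '' U)

/-- `ψ` is reachable by executing `π` under some realization in `U`. -/
def Reachable [DecidableEq ι] (π : (ι → Option O) → Option ι) (U : Set (ι → O))
    (ψ : ι → Option O) : Prop :=
  ∃ φ ∈ U, ∃ n, runPolicy π φ n = ψ

/-- Policy `π` covers the goal value `Q`: under every realization in `U`,
its final observation has utility at least `Q`. -/
def Covers [DecidableEq ι] [Fintype ι] (f : (ι → Option O) → ℝ) (U : Set (ι → O))
    (π : (ι → Option O) → Option ι) (Q : ℝ) : Prop :=
  ∀ φ ∈ U, Q ≤ f (finalPR π φ)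

/-- The worst-case density-greedy policy for the cover problem with goal `Q`:
it stops at observations with `f ψ ≥ Q`, and at any reachable observation with
`f ψ < Q` it selects an item maximizing `Δwc(e | ψ) / c(e)`. -/
def CoverGreedy [DecidableEq ι] [Fintype ι] (f : (ι → Option O) → ℝ)
    (U : Set (ι → O)) (c : ι → ℝ) (Q : ℝ) (π : (ι → Option O) → Option ι) : Prop :=
  ValidPolicy π ∧
  (∀ ψ : ι → Option O, Q ≤ f ψ → π ψ = none) ∧
  (∀ ψ : ι → Option O, Reachable π U ψ → f ψ < Q →
    ∃ e, e ∉ dom ψ ∧ π ψ = some e ∧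
      ∀ e', e' ∉ dom ψ → Dwc f U e' ψ / c e' ≤ Dwc f U e ψ / c e)

/-- The budgeted worst-case density-greedy policy: at any reachable observation
it picks a density-maximizing item and selects it if the budget permits,
stopping otherwise. -/
def BudgetGreedy [DecidableEq ι] [Fintype ι] (f : (ι → Option O) → ℝ)
    (U : Set (ι → O)) (c : ι → ℝ) (B : ℝ) (π : (ι → Option O) → Option ι) : Prop :=
  ValidPolicy π ∧
  ∀ ψ : ι → Option O, Reachable π U ψ → dom ψ ≠ Set.univ →
    ∃ e, e ∉ dom ψ ∧
      (∀ e', e' ∉ dom ψ → Dwc f U e' ψ / c e' ≤ Dwc f U e ψ / c e) ∧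
      ((costPR c ψ + c e ≤ B ∧ π ψ = some e) ∨ (B < costPR c ψ + c e ∧ π ψ = none))

/-- The relaxed budgeted worst-case density-greedy policy: it keeps selecting
density-maximizing items while the cost spent so far is within the budget
(thus also selecting the first item that makes the total cost exceed the
budget), and stops once the budget has been exceeded. -/
def RelaxedBudgetGreedy [DecidableEq ι] [Fintype ι] (f : (ι → Option O) → ℝ)
    (U : Set (ι → O)) (c : ι → ℝ) (B : ℝ) (π : (ι → Option O) → Option ι) : Prop :=
  ValidPolicy π ∧
  (∀ ψ : ι → Option O, Reachable π U ψ → B < costPR c ψ → π ψ = none) ∧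
  (∀ ψ : ι → Option O, Reachable π U ψ → costPR c ψ ≤ B → dom ψ ≠ Set.univ →
    ∃ e, e ∉ dom ψ ∧ π ψ = some e ∧
      ∀ e', e' ∉ dom ψ → Dwc f U e' ψ / c e' ≤ Dwc f U e ψ / c e)

section AuxLemmas

variable {ι O : Type*} [DecidableEq ι]

lemma not_mem_dom {ψ : ι → Option O} {e : ι} : e ∉ dom ψ ↔ ψ e = none := by
  simp [dom]

lemma subreal_refl (ψ : ι → Option O) : subreal ψ ψ := fun _ _ h => h

lemma subreal_trans {a b c : ι → Option O} (h1 : subreal a b) (h2 : subreal b c) :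
    subreal a c := fun e o h => h2 e o (h1 e o h)

lemma consistent_of_subreal {φ : ι → O} {a b : ι → Option O}
    (hab : subreal a b) (h : consistent φ b) : consistent φ a :=
  fun e o he => h e o (hab e o he)

lemma extendPR_self (a : ι → Option O) (e : ι) (o : O) : extendPR a e o e = some o := by
  simp [extendPR]

lemma extendPR_ne (a : ι → Option O) {x e : ι} (h : x ≠ e) (o : O) :
    extendPR a e o x = a x := by simp [extendPR, h]

lemma subreal_extend {a : ι → Option O} {e : ι} (h : a e = none) (o : O) :
    subreal a (extendPR a e o) := by
  intro x o' hx
  rcases eq_or_ne x e with rfl | hne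
  · rw [h] at hx; exact absurd hx (by simp)
  · rw [extendPR_ne a hne]; exact hx

lemma subreal_extend_extend {a b : ι → Option O} (hab : subreal a b) (e : ι) (o : O) :
    subreal (extendPR a e o) (extendPR b e o) := by
  intro x o' hx
  rcases eq_or_ne x e with rfl | hne
  · rw [extendPR_self] at hx ⊢; exact hx
  · rw [extendPR_ne a hne] at hx; rw [extendPR_ne b hne]; exact hab x o' hx

lemma consistent_extendPR {φ : ι → O} {a : ι → Option O} (h : consistent φ a) (e : ι) :
    consistent φ (extendPR a e (φ e)) := by
  intro x o hx
  rcases eq_or_ne x e with rfl | hne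
  · rw [extendPR_self] at hx; exact Option.some.inj hx
  · rw [extendPR_ne a hne] at hx; exact h x o hx

/-- Union of two partial realizations, preferring the first. -/
def unionPR (a b : ι → Option O) : ι → Option O := fun x => (a x).elim (b x) some

lemma unionPR_some_left {a b : ι → Option O} {x : ι} {o : O} (h : a x = some o) :
    unionPR a b x = some o := by simp [unionPR, h]

lemma unionPR_none_left {a : ι → Option O} (b : ι → Option O) {x : ι} (h : a x = none) :
    unionPR a b x = b x := by simp [unionPR, h]

lemma subreal_unionPR_left (a b : ι → Option O) : subreal a (unionPR a b) :=
  fun _ _ h => unionPR_some_left h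

lemma subreal_unionPR_right {φ : ι → O} {a b : ι → Option O}
    (ha : consistent φ a) (hb : consistent φ b) : subreal b (unionPR a b) := by
  intro x o h
  cases hax : a x with
  | none => rw [unionPR_none_left b hax]; exact h
  | some o' =>
    rw [unionPR_some_left hax]
    rw [← hb x o h, ha x o' hax]

lemma consistent_unionPR {φ : ι → O} {a b : ι → Option O}
    (ha : consistent φ a) (hb : consistent φ b) : consistent φ (unionPR a b) := by
  intro x o h
  cases hax : a x with
  | none => rw [unionPR_none_left b hax] at h; exact hb x o h
  | some o' => rw [unionPR_some_left hax] at h; exact ha x o (hax.trans h)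

lemma unionPR_eq_left {a b : ι → Option O} (h : subreal b a) : unionPR a b = a := by
  funext x
  cases hax : a x with
  | some o => exact unionPR_some_left hax
  | none =>
    rw [unionPR_none_left b hax]
    cases hbx : b x with
    | none => rfl
    | some o => rw [h x o hbx] at hax; cases hax

lemma mem_Ostates {U : Set (ι → O)} {φ : ι → O} {ψ : ι → Option O} (e : ι)
    (hφ : φ ∈ U) (h : consistent φ ψ) : φ e ∈ Ostates U e ψ := ⟨φ, hφ, h, rfl⟩

lemma Dwc_le_of_mem [Finite O] {f : (ι → Option O) → ℝ} {U : Set (ι → O)}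
    {e : ι} {ψ : ι → Option O} {o : O} (h : o ∈ Ostates U e ψ) :
    Dwc f U e ψ ≤ f (extendPR ψ e o) - f ψ :=
  csInf_le ((Set.toFinite _).image _).bddBelow ⟨o, h, rfl⟩

lemma Dwc_attained [Finite O] {f : (ι → Option O) → ℝ} {U : Set (ι → O)}
    {e : ι} {ψ : ι → Option O} (h : (Ostates U e ψ).Nonempty) :
    ∃ o ∈ Ostates U e ψ, f (extendPR ψ e o) - f ψ = Dwc f U e ψ := by
  have hfin : ((fun o => f (extendPR ψ e o) - f ψ) '' Ostates U e ψ).Finite :=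
    (Set.toFinite _).image _
  have hmem := (h.image (fun o => f (extendPR ψ e o) - f ψ)).csInf_mem hfin
  obtain ⟨o, ho, heq⟩ := hmem
  exact ⟨o, ho, heq⟩

section Cost

variable [Fintype ι]

lemma costPR_nonneg {c : ι → ℝ} (hc : ∀ e, 0 ≤ c e) (ψ : ι → Option O) :
    0 ≤ costPR c ψ := by
  classical
  apply Finset.sum_nonneg
  intro x _
  split
  · exact hc x
  · exact le_rfl

lemma costPR_empty (c : ι → ℝ) : costPR c (emptyPR : ι → Option O) = 0 := by
  classical
  simp [costPR, emptyPR]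

lemma costPR_extend (c : ι → ℝ) {ψ : ι → Option O} {e : ι} (h : ψ e = none) (o : O) :
    costPR c (extendPR ψ e o) = costPR c ψ + c e := by
  classical
  unfold costPR
  rw [← Finset.sum_erase_add _ _ (Finset.mem_univ e),
      ← Finset.sum_erase_add _ _ (Finset.mem_univ e)]
  have h1 : ∀ x ∈ Finset.univ.erase e,
      (if (extendPR ψ e o x).isSome then c x else 0) = (if (ψ x).isSome then c x else 0) := by
    intro x hx
    rw [extendPR_ne ψ (Finset.ne_of_mem_erase hx) o]
  rw [Finset.sum_congr rfl h1, extendPR_self, h]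
  simp

lemma le_costPR {c : ι → ℝ} (hc : ∀ e, 0 ≤ c e) {ψ : ι → Option O} {e : ι}
    (h : (ψ e).isSome) : c e ≤ costPR c ψ := by
  classical
  unfold costPR
  have : c e = if (ψ e).isSome then c e else 0 := by simp [h]
  rw [this]
  apply Finset.single_le_sum (f := fun x => if (ψ x).isSome then c x else 0)
    (fun x _ => by show 0 ≤ (if (ψ x).isSome then c x else 0)
                   split
                   · exact hc x
                   · exact le_rfl) (Finset.mem_univ e)

end Cost

section Runs

variable {π : (ι → Option O) → Option ι} {φ : ι → O}

/-- Run a policy for `n` steps starting from observation `θ`. -/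
def runFrom (π : (ι → Option O) → Option ι) (φ : ι → O) : ℕ → (ι → Option O) → ι → Option O
  | 0, θ => θ
  | n + 1, θ => runFrom π φ n (stepPolicy π φ θ)

lemma runFrom_succ' (n : ℕ) (θ : ι → Option O) :
    runFrom π φ (n + 1) θ = stepPolicy π φ (runFrom π φ n θ) := by
  induction n generalizing θ with
  | zero => rfl
  | succ n ih => exact ih (stepPolicy π φ θ)

lemma stepPolicy_none {θ : ι → Option O} (h : π θ = none) : stepPolicy π φ θ = θ := by
  unfold stepPolicy
  rw [h]

lemma stepPolicy_some {θ : ι → Option O} {e : ι} (h : π θ = some e) :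
    stepPolicy π φ θ = extendPR θ e (φ e) := by
  unfold stepPolicy
  rw [h]

lemma runPolicy_eq_runFrom (n : ℕ) : runPolicy π φ n = runFrom π φ n emptyPR := by
  induction n with
  | zero => rfl
  | succ n ih =>
    show stepPolicy π φ (runPolicy π φ n) = _
    rw [runFrom_succ', ih]

lemma consistent_stepPolicy (h : consistent φ θ) : consistent φ (stepPolicy π φ θ) := by
  unfold stepPolicy
  cases π θ with
  | none => exact h
  | some e => exact consistent_extendPR h e

lemma consistent_runFrom {θ : ι → Option O} (h : consistent φ θ) (n : ℕ) :
    consistent φ (runFrom π φ n θ) := by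
  induction n generalizing θ with
  | zero => exact h
  | succ n ih => exact ih (consistent_stepPolicy h)

lemma consistent_emptyPR (φ : ι → O) : consistent φ (emptyPR : ι → Option O) := by
  intro e o h; cases h

lemma subreal_stepPolicy (hv : ValidPolicy π) (θ : ι → Option O) :
    subreal θ (stepPolicy π φ θ) := by
  unfold stepPolicy
  cases hπ : π θ with
  | none => exact subreal_refl θ
  | some e => exact subreal_extend (hv θ e hπ) _

lemma subreal_runFrom (hv : ValidPolicy π) (n : ℕ) (θ : ι → Option O) :
    subreal θ (runFrom π φ n θ) := by
  induction n generalizing θ with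
  | zero => exact subreal_refl θ
  | succ n ih => exact subreal_trans (subreal_stepPolicy hv θ) (ih (stepPolicy π φ θ))

end Runs

open Classical in
/-- Monotonicity of `f` along consistent extensions. -/
lemma f_le_of_subreal [Fintype ι] [Finite O] {f : (ι → Option O) → ℝ} {U : Set (ι → O)}
    (hmono : WCMonotone f U) {φ : ι → O} (hφ : φ ∈ U) :
    ∀ (n : ℕ) (a b : ι → Option O),
      (Finset.univ.filter (fun x => a x = none ∧ b x ≠ none)).card ≤ n →
      subreal a b → consistent φ b → f a ≤ f b := by
  classical
  intro n
  induction n with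
  | zero =>
    intro a b hcard hab hb
    have hempty : ∀ x, ¬(a x = none ∧ b x ≠ none) := by
      intro x hx
      have : x ∈ Finset.univ.filter (fun x => a x = none ∧ b x ≠ none) :=
        Finset.mem_filter.mpr ⟨Finset.mem_univ x, hx⟩
      have := Finset.card_pos.mpr ⟨x, this⟩
      omega
    have : a = b := by
      funext x
      cases hax : a x with
      | some o => exact (hab x o hax).symm
      | none =>
        cases hbx : b x with
        | none => rfl
        | some o => exact absurd ⟨hax, by rw [hbx]; simp⟩ (hempty x)
    rw [this]
  | succ n ih =>
    intro a b hcard hab hb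
    by_cases hex : ∃ x, a x = none ∧ b x ≠ none
    · obtain ⟨e, hae, hbe⟩ := hex
      have hcons_a : consistent φ a := consistent_of_subreal hab hb
      set a' := extendPR a e (φ e) with ha'
      have h1 : f a ≤ f a' := by
        have hD := hmono a ⟨φ, hφ, hcons_a⟩ e (not_mem_dom.mpr hae)
        have hle := Dwc_le_of_mem (f := f) (mem_Ostates e hφ hcons_a)
        linarith
      have hab' : subreal a' b := by
        intro x o hx
        rcases eq_or_ne x e with rfl | hne
        · rw [ha', extendPR_self] at hx
          cases hbx : b x with
          | none => exact absurd hbx hbe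
          | some o' =>
            exact congrArg some ((hb x o' hbx).symm.trans (Option.some.inj hx))
        · rw [ha', extendPR_ne a hne] at hx; exact hab x o hx
      have hmem : e ∈ Finset.univ.filter (fun x => a x = none ∧ b x ≠ none) :=
        Finset.mem_filter.mpr ⟨Finset.mem_univ e, hae, hbe⟩
      have hsub : Finset.univ.filter (fun x => a' x = none ∧ b x ≠ none) ⊆
          (Finset.univ.filter (fun x => a x = none ∧ b x ≠ none)).erase e := by
        intro x hx
        obtain ⟨-, hx1, hx2⟩ := Finset.mem_filter.mp hx
        have hxe : x ≠ e := by
          intro h; rw [h, ha', extendPR_self] at hx1; cases hx1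
        rw [ha', extendPR_ne a hxe] at hx1
        exact Finset.mem_erase.mpr ⟨hxe, Finset.mem_filter.mpr ⟨Finset.mem_univ x, hx1, hx2⟩⟩
      have hcard' : (Finset.univ.filter (fun x => a' x = none ∧ b x ≠ none)).card ≤ n := by
        have := Finset.card_le_card hsub
        rw [Finset.card_erase_of_mem hmem] at this
        omega
      exact le_trans h1 (ih a' b hcard' hab' hb)
    · push_neg at hex
      have : a = b := by
        funext x
        cases hax : a x with
        | some o => exact (hab x o hax).symm
        | none =>
          cases hbx : b x with
          | none => rfl
          | some o =>
            have hbn := hex x hax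
            rw [hbn] at hbx
            cases hbx
      rw [this]

open Classical in
lemma f_le_of_subreal' [Fintype ι] [Finite O] {f : (ι → Option O) → ℝ} {U : Set (ι → O)}
    (hmono : WCMonotone f U) {φ : ι → O} (hφ : φ ∈ U) {a b : ι → Option O}
    (hab : subreal a b) (hb : consistent φ b) : f a ≤ f b := by
  classical
  exact f_le_of_subreal hmono hφ
    (Finset.univ.filter (fun x => a x = none ∧ b x ≠ none)).card a b le_rfl hab hb

lemma subreal_toPR {φ : ι → O} {ψ : ι → Option O} (h : consistent φ ψ) :
    subreal ψ (toPR φ) := by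
  intro x o hx
  rw [toPR, h x o hx]

lemma consistent_toPR (φ : ι → O) : consistent φ (toPR φ) := by
  intro x o hx
  exact Option.some.inj hx

end AuxLemmas

section DensityLemma

variable {ι O : Type*} [DecidableEq ι] [Fintype ι] [Finite O]

lemma density_aux {f : (ι → Option O) → ℝ} {U : Set (ι → O)}
    (hsub : WCSubmodular f U) {c : ι → ℕ}
    {πs : (ι → Option O) → Option ι} (hπs : ValidPolicy πs)
    {ψ : ι → Option O} {ρ : ℝ} (hρ : 0 ≤ ρ)
    (hd : ∀ e, ψ e = none → Dwc f U e ψ ≤ ρ * c e) :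
    ∀ (n : ℕ) (θ κ : ι → Option O), subreal θ κ → subreal ψ κ →
      (∃ φ ∈ U, consistent φ κ) →
      ∃ φ' ∈ U, consistent φ' κ ∧
        f (unionPR κ (runFrom πs φ' n θ)) - f κ ≤
          ρ * (costPR (fun e => (c e : ℝ)) (runFrom πs φ' n θ) -
               costPR (fun e => (c e : ℝ)) θ) := by
  intro n
  induction n with
  | zero =>
    intro θ κ hθκ hψκ hcons
    obtain ⟨φ₀, hφ₀, hc₀⟩ := hcons
    refine ⟨φ₀, hφ₀, hc₀, ?_⟩
    show f (unionPR κ θ) - f κ ≤ ρ * (costPR _ θ - costPR _ θ)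
    rw [unionPR_eq_left hθκ]
    simp
  | succ n ih =>
    intro θ κ hθκ hψκ hcons
    cases hπθ : πs θ with
    | none =>
      obtain ⟨φ', hφ', hc', hb⟩ := ih θ κ hθκ hψκ hcons
      refine ⟨φ', hφ', hc', ?_⟩
      have hrw : runFrom πs φ' (n + 1) θ = runFrom πs φ' n θ := by
        show runFrom πs φ' n (stepPolicy πs φ' θ) = _
        rw [stepPolicy_none hπθ]
      rw [hrw]
      exact hb
    | some e =>
      have hθe : θ e = none := hπs θ e hπθ
      cases hκe : κ e with
      | some o =>
        have hθ'κ : subreal (extendPR θ e o) κ := by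
          intro x o' hx
          rcases eq_or_ne x e with rfl | hne
          · rw [extendPR_self] at hx; rw [hκe, hx]
          · rw [extendPR_ne θ hne] at hx; exact hθκ x o' hx
        obtain ⟨φ', hφ', hc', hb⟩ := ih (extendPR θ e o) κ hθ'κ hψκ hcons
        have hφe : φ' e = o := hc' e o hκe
        refine ⟨φ', hφ', hc', ?_⟩
        have hrw : runFrom πs φ' (n + 1) θ = runFrom πs φ' n (extendPR θ e o) := by
          show runFrom πs φ' n (stepPolicy πs φ' θ) = _
          rw [stepPolicy_some hπθ, hφe]
        rw [hrw]
        rw [costPR_extend _ hθe o] at hb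
        have hce : (0 : ℝ) ≤ (c e : ℝ) := by positivity
        nlinarith
      | none =>
        have hψe : ψ e = none := by
          cases hψx : ψ e with
          | none => rfl
          | some o => rw [hψκ e o hψx] at hκe; cases hκe
        obtain ⟨φ₀, hφ₀, hc₀⟩ := hcons
        obtain ⟨o, ho, hoeq⟩ := Dwc_attained (f := f)
          ⟨φ₀ e, mem_Ostates e hφ₀ hc₀⟩
        set κ' := extendPR κ e o with hκ'
        have hconsκ' : ∃ φ ∈ U, consistent φ κ' := by
          obtain ⟨φo, hφoU, hφoc, hφoe⟩ := ho
          exact ⟨φo, hφoU, by rw [hκ', ← hφoe]; exact consistent_extendPR hφoc e⟩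
        obtain ⟨φ', hφ', hc', hb⟩ := ih (extendPR θ e o) κ'
          (subreal_extend_extend hθκ e o)
          (subreal_trans hψκ (subreal_extend hκe o)) hconsκ'
        have hφe : φ' e = o := hc' e o (extendPR_self κ e o)
        have hrw : runFrom πs φ' (n + 1) θ = runFrom πs φ' n (extendPR θ e o) := by
          show runFrom πs φ' n (stepPolicy πs φ' θ) = _
          rw [stepPolicy_some hπθ, hφe]
        set X := runFrom πs φ' n (extendPR θ e o) with hX
        have hXe : X e = some o := subreal_runFrom hπs n _ e o (extendPR_self θ e o)
        have hunion : unionPR κ X = unionPR κ' X := by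
          funext x
          rcases eq_or_ne x e with rfl | hne
          · rw [unionPR_none_left X hκe, hXe, unionPR_some_left (extendPR_self κ x o)]
          · cases hκx : κ x with
            | none =>
              rw [unionPR_none_left X hκx,
                unionPR_none_left X (by rw [hκ', extendPR_ne κ hne]; exact hκx)]
            | some o' =>
              rw [unionPR_some_left hκx,
                unionPR_some_left (by rw [hκ', extendPR_ne κ hne]; exact hκx)]
        have hDκ : f κ' - f κ ≤ ρ * c e := by
          have h2 : Dwc f U e κ ≤ Dwc f U e ψ :=
            hsub ψ κ hψκ ⟨φ₀, hφ₀, hc₀⟩ e (not_mem_dom.mpr hκe)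
          have h3 := hd e hψe
          rw [hκ']
          linarith [hoeq]
        refine ⟨φ', hφ', consistent_of_subreal (subreal_extend hκe o) hc', ?_⟩
        rw [hrw, hunion]
        rw [costPR_extend _ hθe o] at hb
        have hring : ρ * (costPR (fun e => (c e : ℝ)) X - (costPR (fun e => (c e : ℝ)) θ + c e))
            + ρ * c e = ρ * (costPR (fun e => (c e : ℝ)) X - costPR (fun e => (c e : ℝ)) θ) := by
          ring
        linarith

lemma density_lemma {f : (ι → Option O) → ℝ} {U : Set (ι → O)}
    (hmono : WCMonotone f U) (hsub : WCSubmodular f U) {c : ι → ℕ}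
    {πs : (ι → Option O) → Option ι} (hπs : ValidPolicy πs) {Q : ℝ}
    (hcov : Covers f U πs Q)
    {ψ : ι → Option O} (hcons : ∃ φ ∈ U, consistent φ ψ) {ρ : ℝ} (hρ : 0 ≤ ρ)
    (hd : ∀ e, ψ e = none → Dwc f U e ψ ≤ ρ * c e) :
    Q - f ψ ≤ ρ * cwc (fun e => (c e : ℝ)) U πs := by
  obtain ⟨φ', hφ', hc', hb⟩ := density_aux hsub hπs hρ hd (Fintype.card ι)
    emptyPR ψ (fun e o h => by cases h) (subreal_refl ψ) hcons
  set X := runFrom πs φ' (Fintype.card ι) (emptyPR : ι → Option O) with hX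
  have hXfinal : X = finalPR πs φ' := by
    rw [hX, finalPR, runPolicy_eq_runFrom]
  have hconsX : consistent φ' X := consistent_runFrom (consistent_emptyPR φ') _
  have hfX : Q ≤ f X := by rw [hXfinal]; exact hcov φ' hφ'
  have hXle : f X ≤ f (unionPR ψ X) :=
    f_le_of_subreal' hmono hφ' (subreal_unionPR_right hc' hconsX)
      (consistent_unionPR hc' hconsX)
  have hBdd : BddAbove ((fun φ => costPR (fun e => (c e : ℝ)) (finalPR πs φ)) '' U) :=
    ((Set.toFinite U).image _).bddAbove
  have hcostX : costPR (fun e => (c e : ℝ)) X ≤ cwc (fun e => (c e : ℝ)) U πs := by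
    rw [hXfinal]
    exact le_csSup hBdd ⟨φ', hφ', rfl⟩
  have h0 : costPR (fun e => (c e : ℝ)) (emptyPR : ι → Option O) = 0 := costPR_empty _
  rw [h0] at hb
  have := mul_le_mul_of_nonneg_left hcostX hρ
  linarith

end DensityLemma

/-- **Theorem 2 (main cover result).** Suppose `f` is worst-case monotone and
worst-case submodular, `f ∅ = 0` and `f φ = Q > 0` for every `φ ∈ U`. Let
`0 < η ≤ Q` be such that `f ψ > Q − η` implies `f ψ = Q` for every partial
realization `ψ` consistent with some realization in `U`. Then the worst-case
density-greedy policy `π^g` satisfies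
`c_wc(π^g) ≤ (ln (Q/η) + 1) · c_wc(π*)` for every adaptive policy `π*`
covering `Q`. -/
theorem stmt_9 {ι O : Type*} [Fintype ι] [Nonempty ι] [DecidableEq ι] [Fintype O]
    (U : Set (ι → O)) (hU : U.Nonempty)
    (c : ι → ℕ) (hc : ∀ e, 0 < c e)
    (f : (ι → Option O) → ℝ) (hf0 : ∀ ψ, 0 ≤ f ψ)
    (hmono : WCMonotone f U) (hsub : WCSubmodular f U)
    (Q : ℝ) (hQ : 0 < Q) (hempty : f emptyPR = 0)
    (hfull : ∀ φ ∈ U, f (toPR φ) = Q)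
    (η : ℝ) (hη0 : 0 < η) (hηQ : η ≤ Q)
    (hgap : ∀ ψ : ι → Option O, (∃ φ ∈ U, consistent φ ψ) → Q - η < f ψ → f ψ = Q)
    (πg : (ι → Option O) → Option ι)
    (hg : CoverGreedy f U (fun e => (c e : ℝ)) Q πg)
    (πs : (ι → Option O) → Option ι) (hπs : ValidPolicy πs)
    (hcov : Covers f U πs Q) :
    cwc (fun e => (c e : ℝ)) U πg ≤
      (Real.log (Q / η) + 1) * cwc (fun e => (c e : ℝ)) U πs := by
  classical
  obtain ⟨hgv, hgstop, hgsel⟩ := hg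
  obtain ⟨φ₀, hφ₀⟩ := hU
  have hcR0 : ∀ e : ι, (0:ℝ) ≤ (c e : ℝ) := fun e => by positivity
  have hcRpos : ∀ e : ι, (0:ℝ) < (c e : ℝ) := fun e => by exact_mod_cast hc e
  have hBdd : BddAbove ((fun φ => costPR (fun e => (c e : ℝ)) (finalPR πs φ)) '' U) :=
    ((Set.toFinite U).image _).bddAbove
  have hB0 : 0 < cwc (fun e => (c e : ℝ)) U πs := by
    have h1 : Q ≤ f (finalPR πs φ₀) := hcov φ₀ hφ₀
    have h3 : ∃ e, (finalPR πs φ₀ e).isSome := by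
      by_contra hno
      push_neg at hno
      have hemp : finalPR πs φ₀ = emptyPR := by
        funext x
        have := hno x
        simpa [emptyPR, Option.not_isSome_iff_eq_none] using this
      rw [hemp, hempty] at h1; linarith
    obtain ⟨e, he⟩ := h3
    have h4 : (c e : ℝ) ≤ costPR (fun e => (c e : ℝ)) (finalPR πs φ₀) := le_costPR hcR0 he
    have h5 : costPR (fun e => (c e : ℝ)) (finalPR πs φ₀) ≤ cwc (fun e => (c e : ℝ)) U πs :=
      le_csSup hBdd ⟨φ₀, hφ₀, rfl⟩
    have := hcRpos e
    linarith
  have hlog0 : 0 ≤ Real.log (Q / η) :=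
    Real.log_nonneg (by rw [le_div_iff₀ hη0]; linarith)
  have key : ∀ φ ∈ U, costPR (fun e => (c e : ℝ)) (finalPR πg φ) ≤
      (Real.log (Q / η) + 1) * cwc (fun e => (c e : ℝ)) U πs := by
    intro φ hφ
    set ψ : ℕ → ι → Option O := fun n => runPolicy πg φ n with hψdef
    have hψ0 : ψ 0 = emptyPR := rfl
    have hψsucc : ∀ n, ψ (n + 1) = stepPolicy πg φ (ψ n) := fun n => rfl
    have hconsn : ∀ n, consistent φ (ψ n) := by
      intro n
      have : ψ n = runFrom πg φ n emptyPR := runPolicy_eq_runFrom n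
      rw [this]
      exact consistent_runFrom (consistent_emptyPR φ) n
    have hfle : ∀ n, f (ψ n) ≤ Q := by
      intro n
      have h := f_le_of_subreal' hmono hφ (subreal_toPR (hconsn n)) (consistent_toPR φ)
      rw [hfull φ hφ] at h
      exact h
    have hstep : ∀ n e, πg (ψ n) = some e →
        f (ψ n) < Q ∧ ψ n e = none ∧ ψ (n + 1) = extendPR (ψ n) e (φ e) ∧
        costPR (fun e => (c e : ℝ)) (ψ (n + 1)) =
          costPR (fun e => (c e : ℝ)) (ψ n) + (c e : ℝ) ∧
        (Q - f (ψ n)) * (c e : ℝ) ≤ cwc (fun e => (c e : ℝ)) U πs * Dwc f U e (ψ n) ∧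
        Dwc f U e (ψ n) ≤ f (ψ (n + 1)) - f (ψ n) := by
      intro n e hsome
      have hfn : f (ψ n) < Q := by
        by_contra hge
        rw [hgstop (ψ n) (not_lt.mp hge)] at hsome
        cases hsome
      have hen : ψ n e = none := hgv (ψ n) e hsome
      have hrun : ψ (n + 1) = extendPR (ψ n) e (φ e) := by
        rw [hψsucc n, stepPolicy_some hsome]
      have hDle : Dwc f U e (ψ n) ≤ f (ψ (n + 1)) - f (ψ n) := by
        rw [hrun]
        exact Dwc_le_of_mem (mem_Ostates e hφ (hconsn n))
      have hcost : costPR (fun e => (c e : ℝ)) (ψ (n + 1)) =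
          costPR (fun e => (c e : ℝ)) (ψ n) + (c e : ℝ) := by
        rw [hrun, costPR_extend _ hen]
      obtain ⟨e₀, he₀dom, he₀eq, hmax⟩ := hgsel (ψ n) ⟨φ, hφ, n, rfl⟩ hfn
      have hee : e₀ = e := by
        rw [he₀eq] at hsome
        exact Option.some.inj hsome
      subst hee
      have hD0 : 0 ≤ Dwc f U e₀ (ψ n) := hmono (ψ n) ⟨φ, hφ, hconsn n⟩ e₀ he₀dom
      have hρ0 : 0 ≤ Dwc f U e₀ (ψ n) / (c e₀ : ℝ) := div_nonneg hD0 (hcR0 e₀)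
      have hdens : Q - f (ψ n) ≤ Dwc f U e₀ (ψ n) / (c e₀ : ℝ) *
          cwc (fun e => (c e : ℝ)) U πs := by
        apply density_lemma hmono hsub hπs hcov ⟨φ, hφ, hconsn n⟩ hρ0
        intro e' he'
        have h := hmax e' (not_mem_dom.mpr he')
        exact (div_le_iff₀ (hcRpos e')).mp h
      refine ⟨hfn, hen, hrun, hcost, ?_, hDle⟩
      have hmul := mul_le_mul_of_nonneg_right hdens (hcR0 e₀)
      have hne : (c e₀ : ℝ) ≠ 0 := ne_of_gt (hcRpos e₀)
      have heq : Dwc f U e₀ (ψ n) / (c e₀ : ℝ) * cwc (fun e => (c e : ℝ)) U πs * (c e₀ : ℝ)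
          = cwc (fun e => (c e : ℝ)) U πs * Dwc f U e₀ (ψ n) := by
        field_simp
      linarith
    have claimA : ∀ n, f (ψ n) < Q → costPR (fun e => (c e : ℝ)) (ψ n) ≤
        cwc (fun e => (c e : ℝ)) U πs * Real.log (Q / (Q - f (ψ n))) := by
      intro n
      induction n with
      | zero =>
        intro _
        rw [hψ0, costPR_empty, hempty, sub_zero, div_self (ne_of_gt hQ),
          Real.log_one, mul_zero]
      | succ n ihn =>
        intro hfn1
        cases hs : πg (ψ n) with
        | none =>
          have heq : ψ (n + 1) = ψ n := by rw [hψsucc n, stepPolicy_none hs]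
          rw [heq] at hfn1 ⊢
          exact ihn hfn1
        | some e =>
          obtain ⟨hfn, hen, hrun, hcost, hkey, hDle⟩ := hstep n e hs
          have hgn : 0 < Q - f (ψ n) := by linarith
          have hgn1 : 0 < Q - f (ψ (n + 1)) := by linarith
          have hD0 : 0 ≤ Dwc f U e (ψ n) := hmono (ψ n) ⟨φ, hφ, hconsn n⟩ e (not_mem_dom.mpr hen)
          have hce : (c e : ℝ) * (Q - f (ψ n)) ≤
              cwc (fun e => (c e : ℝ)) U πs * ((Q - f (ψ n)) - (Q - f (ψ (n + 1)))) := by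
            have h2 := mul_le_mul_of_nonneg_left hDle hB0.le
            nlinarith
          have hcele : (c e : ℝ) ≤ cwc (fun e => (c e : ℝ)) U πs *
              (((Q - f (ψ n)) - (Q - f (ψ (n + 1)))) / (Q - f (ψ n))) := by
            rw [← mul_div_assoc, le_div_iff₀ hgn]
            linarith
          have hlog : ((Q - f (ψ n)) - (Q - f (ψ (n + 1)))) / (Q - f (ψ n)) ≤
              Real.log (Q / (Q - f (ψ (n + 1)))) - Real.log (Q / (Q - f (ψ n))) := by
            rw [Real.log_div (ne_of_gt hQ) (ne_of_gt hgn1),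
              Real.log_div (ne_of_gt hQ) (ne_of_gt hgn)]
            have h1 : Real.log ((Q - f (ψ (n + 1))) / (Q - f (ψ n))) ≤
                (Q - f (ψ (n + 1))) / (Q - f (ψ n)) - 1 :=
              Real.log_le_sub_one_of_pos (div_pos hgn1 hgn)
            rw [Real.log_div (ne_of_gt hgn1) (ne_of_gt hgn)] at h1
            have h2 : ((Q - f (ψ n)) - (Q - f (ψ (n + 1)))) / (Q - f (ψ n)) =
                1 - (Q - f (ψ (n + 1))) / (Q - f (ψ n)) := by
              field_simp
            rw [h2]
            linarith
          have hBx := mul_le_mul_of_nonneg_left hlog hB0.le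
          have hsplit : cwc (fun e => (c e : ℝ)) U πs *
              (Real.log (Q / (Q - f (ψ (n + 1)))) - Real.log (Q / (Q - f (ψ n)))) =
              cwc (fun e => (c e : ℝ)) U πs * Real.log (Q / (Q - f (ψ (n + 1)))) -
              cwc (fun e => (c e : ℝ)) U πs * Real.log (Q / (Q - f (ψ n))) := by ring
          have hfin := ihn hfn
          rw [hcost]
          linarith
    by_cases hfinQ : f (ψ (Fintype.card ι)) < Q
    · have h1 := claimA _ hfinQ
      have hgap1 : η ≤ Q - f (ψ (Fintype.card ι)) := by
        by_contra hlt
        push_neg at hlt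
        have := hgap (ψ (Fintype.card ι)) ⟨φ, hφ, hconsn _⟩ (by linarith)
        linarith
      have hgNpos : 0 < Q - f (ψ (Fintype.card ι)) := by linarith
      have hloglt : Real.log (Q / (Q - f (ψ (Fintype.card ι)))) ≤ Real.log (Q / η) := by
        apply (Real.log_le_log_iff (by positivity) (by positivity)).mpr
        exact div_le_div_of_nonneg_left hQ.le hη0 hgap1
      have hmul := mul_le_mul_of_nonneg_left hloglt hB0.le
      have hexp : (Real.log (Q / η) + 1) * cwc (fun e => (c e : ℝ)) U πs =
          cwc (fun e => (c e : ℝ)) U πs * Real.log (Q / η) +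
          cwc (fun e => (c e : ℝ)) U πs := by ring
      show costPR (fun e => (c e : ℝ)) (ψ (Fintype.card ι)) ≤ _
      linarith
    · push_neg at hfinQ
      have hP0 : f (ψ 0) < Q := by rw [hψ0, hempty]; exact hQ
      set k := Nat.findGreatest (fun n => f (ψ n) < Q) (Fintype.card ι) with hk
      have hkspec : f (ψ k) < Q := by
        have h := Nat.findGreatest_spec (P := fun n => f (ψ n) < Q)
          (Nat.zero_le (Fintype.card ι)) hP0
        rw [hk]
        exact h
      have hkle : k ≤ Fintype.card ι := Nat.findGreatest_le _
      have hkgt : ∀ m, k < m → m ≤ Fintype.card ι → Q ≤ f (ψ m) := by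
        intro m h1 h2
        exact not_lt.mp (Nat.findGreatest_is_greatest (P := fun n => f (ψ n) < Q) h1 h2)
      have hkN : k < Fintype.card ι := by
        rcases lt_or_eq_of_le hkle with h | h
        · exact h
        · exfalso
          rw [h] at hkspec
          exact absurd hkspec (not_lt.mpr hfinQ)
      obtain ⟨e₀, he₀dom, he₀eq, hmax⟩ := hgsel (ψ k) ⟨φ, hφ, k, rfl⟩ hkspec
      obtain ⟨hfk, hek, hrunk, hcostk, hkeyk, hDlek⟩ := hstep k e₀ he₀eq
      have hfk1 : Q ≤ f (ψ (k + 1)) := hkgt (k + 1) (Nat.lt_succ_self k) hkN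
      have hconst : ∀ j, ψ (k + 1 + j) = ψ (k + 1) := by
        intro j
        induction j with
        | zero => rfl
        | succ j ihj =>
          have hnone : πg (ψ (k + 1 + j)) = none := by
            rw [ihj]
            exact hgstop _ hfk1
          have : ψ (k + 1 + (j + 1)) = stepPolicy πg φ (ψ (k + 1 + j)) := rfl
          rw [this, stepPolicy_none hnone, ihj]
      have hψN : ψ (Fintype.card ι) = ψ (k + 1) := by
        have hdec : Fintype.card ι = k + 1 + (Fintype.card ι - (k + 1)) := by omega
        rw [hdec, hconst]
      have hgk : 0 < Q - f (ψ k) := by linarith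
      have hDub : Dwc f U e₀ (ψ k) ≤ Q - f (ψ k) := by linarith [hfle (k + 1)]
      have hceB : (c e₀ : ℝ) ≤ cwc (fun e => (c e : ℝ)) U πs := by
        have h2 : cwc (fun e => (c e : ℝ)) U πs * Dwc f U e₀ (ψ k) ≤
            cwc (fun e => (c e : ℝ)) U πs * (Q - f (ψ k)) :=
          mul_le_mul_of_nonneg_left hDub hB0.le
        nlinarith
      have hgapk : η ≤ Q - f (ψ k) := by
        by_contra hlt
        push_neg at hlt
        have := hgap (ψ k) ⟨φ, hφ, hconsn k⟩ (by linarith)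
        linarith
      have h1 := claimA k hfk
      have hloglt : Real.log (Q / (Q - f (ψ k))) ≤ Real.log (Q / η) := by
        apply (Real.log_le_log_iff (by positivity) (by positivity)).mpr
        exact div_le_div_of_nonneg_left hQ.le hη0 hgapk
      have hmul := mul_le_mul_of_nonneg_left hloglt hB0.le
      have hexp : (Real.log (Q / η) + 1) * cwc (fun e => (c e : ℝ)) U πs =
          cwc (fun e => (c e : ℝ)) U πs * Real.log (Q / η) +
          cwc (fun e => (c e : ℝ)) U πs := by ring
      show costPR (fun e => (c e : ℝ)) (ψ (Fintype.card ι)) ≤ _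
      rw [hψN, hcostk]
      linarith
  show sSup ((fun φ => costPR (fun e => (c e : ℝ)) (finalPR πg φ)) '' U) ≤ _
  apply csSup_le ⟨_, Set.mem_image_of_mem _ hφ₀⟩
  rintro x ⟨φ, hφ, rfl⟩
  exact key φ hφ

end WCAS
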